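/- A directed crossover can planarly simulate an undirected crossover: wiring four directed crossovers as in the construction yields a planar system with four external locations, alternating in cyclic order, in which the agent can traverse between each pair of opposite external locations in both directions and cannot traverse between adjacent external locations. -/

import Mathlib

/-- Planar-gadget data on state type `St` and location type `Lc`: a set of traversals
together with a cyclic order of the locations, given as a list (up to rotation and
reflection) containing each location exactly once. -/
structure PGData (St Lc : Type) where
  trav : (St × Lc) → (St × Lc) → Prop
  cyc : List Lc
  cyc_nodup : cyc.Nodup
  cyc_complete : ∀ l, l ∈ cyc

/-- A planar gadget: finite state and location sets plus planar gadget data. -/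
structure PlanarGadget where
  State : Type
  Loc : Type
  stateFin : Fintype State
  locFin : Fintype Loc
  data : PGData State Loc

/-- Make a planar gadget from its data. -/
def mkPG {St Lc : Type} [Fintype St] [Fintype Lc] (d : PGData St Lc) : PlanarGadget :=
  ⟨St, Lc, inferInstance, inferInstance, d⟩

open Classical in
/-- Update the state of one gadget instance in a global state. -/
noncomputable def updState {ι St : Type} (σg : ι → St) (i : ι) (s : St) : ι → St :=
  fun j => if j = i then s else σg j

/-- The cyclic successor of `a` in the list `L`. -/
noncomputable def cycNext {α : Type} (L : List α) (a : α) : α :=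
  letI := Classical.decEq α
  L.getD ((L.idxOf a + 1) % L.length) a

/-- Number of orbits of the function `f` (the equivalence closure of `f x = y`). -/
noncomputable def orbCount {D : Type} (f : D → D) : ℕ :=
  Nat.card (Quotient (⟨Relation.EqvGen fun x y => f x = y,
    Relation.EqvGen.is_equivalence _⟩ : Setoid D))

/-- Number of joint orbits of two functions `f`, `g`. -/
noncomputable def orbCount2 {D : Type} (f g : D → D) : ℕ :=
  Nat.card (Quotient (⟨Relation.EqvGen fun x y => f x = y ∨ g x = y,
    Relation.EqvGen.is_equivalence _⟩ : Setoid D))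
/-- A system of copies of gadgets from the family `fam` (all on the same state and
location types), drawn in the plane, presented as a combinatorial map:
* a finite set `ι` of gadget instances (instance `i` being a copy of `fam (kind i)`) and
  a finite set `J` of junction vertices (points where connections meet freely);
* a finite set `D` of darts with a rotation permutation `σ` and a fixed-point-free edge
  involution `τ` (each connection contributes a pair of darts swapped by `τ`);
* every location of every instance carries exactly one dart, the rotation at an instance
  follows the gadget's cyclic order of locations, and the rotation at a junction is a
  single (arbitrary) cycle on its darts. -/
structure MSystem {St Lc κ : Type} (fam : κ → PGData St Lc) where
  ι : Type
  instFin : Fintype ι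
  kind : ι → κ
  J : Type
  juncFin : Fintype J
  D : Type
  dartFin : Fintype D
  σ : Equiv.Perm D
  τ : Equiv.Perm D
  τ_invol : ∀ d, τ (τ d) = d
  τ_nofix : ∀ d, τ d ≠ d
  vert : D → ι ⊕ J
  port : D → Lc
  port_unique : ∀ (i : ι) (l : Lc), ∃! d : D, vert d = Sum.inl i ∧ port d = l
  σ_vert : ∀ d, vert (σ d) = vert d
  σ_port : ∀ (d : D) (i : ι), vert d = Sum.inl i →
    port (σ d) = cycNext (fam (kind i)).cyc (port d)
  σ_junc : ∀ (d d' : D) (j : J), vert d = Sum.inr j → vert d' = Sum.inr j →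
    Relation.EqvGen (fun x y => σ x = y) d d'

namespace MSystem

variable {St Lc κ : Type} {fam : κ → PGData St Lc}

/-- The position (instance-location or junction) at which a dart is attached. -/
def endpt (S : MSystem fam) (d : S.D) : (S.ι × Lc) ⊕ S.J :=
  match S.vert d with
  | Sum.inl i => Sum.inl (i, S.port d)
  | Sum.inr j => Sum.inr j

/-- The face permutation of the combinatorial map. -/
def facePerm (S : MSystem fam) : S.D → S.D := fun d => S.σ (S.τ d)

/-- Planarity of the combinatorial map, via the Euler characteristic:
`V + F = E + 2 C` (vertices + faces = edges + 2 · connected components). -/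
def IsPlanar (S : MSystem fam) : Prop :=
  orbCount (fun d => S.σ d) + orbCount S.facePerm =
    orbCount (fun d => S.τ d) + 2 * orbCount2 (fun d => S.σ d) (fun d => S.τ d)

/-- `d` is the dart at the instance-location `x`. -/
def IsDartAt (S : MSystem fam) (x : S.ι × Lc) (d : S.D) : Prop :=
  S.vert d = Sum.inl x.1 ∧ S.port d = x.2

end MSystem

/-- A single move of the agent in a planar system: a traversal inside one instance
(changing only that instance's state), or a free move along a connection (an edge of
the map, between the endpoints of a dart and its `τ`-partner). -/
inductive MStep {St Lc κ : Type} (fam : κ → PGData St Lc) (S : MSystem fam) :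
    ((S.ι → St) × ((S.ι × Lc) ⊕ S.J)) → ((S.ι → St) × ((S.ι × Lc) ⊕ S.J)) → Prop
  | trav {σg : S.ι → St} {i : S.ι} {a b : Lc} {s' : St} :
      (fam (S.kind i)).trav (σg i, a) (s', b) →
      MStep fam S (σg, Sum.inl (i, a)) (updState σg i s', Sum.inl (i, b))
  | wire {σg : S.ι → St} (d : S.D) :
      MStep fam S (σg, S.endpt d) (σg, S.endpt (S.τ d))

/-- The planar system `S`, with external locations `ext` and state encoding `enc`,
is a planar simulation of the planar gadget `H`:
* `ext` identifies the locations of `H` injectively with instance-locations of `S` and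
  `enc` encodes the states of `H` injectively as global states of `S`;
* the underlying combinatorial map is planar;
* the reachability behavior between external locations in encoded global states is
  exactly the transitive closure of `H`;
* all external locations lie on one common face of the map, and the cyclic order in
  which that face visits them is the cyclic order of the locations of `H`
  (up to rotation and reflection). -/
def IsPlanarSimulation {St Lc κ : Type} (fam : κ → PGData St Lc) (H : PlanarGadget)
    (S : MSystem fam) (ext : H.Loc → S.ι × Lc) (enc : H.State → (S.ι → St)) : Prop :=
  Function.Injective ext ∧ Function.Injective enc ∧ S.IsPlanar ∧
  (∀ s s' a b,
      Relation.ReflTransGen (MStep fam S) (enc s, Sum.inl (ext a)) (enc s', Sum.inl (ext b)) ↔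
      Relation.ReflTransGen H.data.trav (s, a) (s', b)) ∧
  (∃ r : Bool, ∀ (a : H.Loc) (da db : S.D),
      S.IsDartAt (ext a) da →
      S.IsDartAt (ext (cycNext (if r then H.data.cyc else H.data.cyc.reverse) a)) db →
      ∃ k, 0 < k ∧ S.facePerm^[k] da = db ∧
        ∀ j, 0 < j → j < k → ∀ c, ¬ S.IsDartAt (ext c) (S.facePerm^[j] da))

/-- The family `fam` of planar gadgets can planarly simulate the planar gadget `H`. -/
def PlanarlySimulatesFam {St Lc κ : Type} (fam : κ → PGData St Lc)
    (H : PlanarGadget) : Prop :=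
  ∃ (S : MSystem fam) (ext : H.Loc → S.ι × Lc) (enc : H.State → (S.ι → St)),
    IsPlanarSimulation fam H S ext enc

/-- The planar gadget `G` can planarly simulate the planar gadget `H`. -/
def PlanarlySimulates (G H : PlanarGadget) : Prop :=
  PlanarlySimulatesFam (fun _ : Unit => G.data) H

/-! ### Gadgets.  For 2-state gadgets, state `true` = open, `false` = closed.
A direction flag `true` means the corresponding tunnel is directed. -/

/-- Locations of a door with an opening tunnel. -/
inductive DoorLoc | O0 | O1 | T0 | T1 | C0 | C1
deriving DecidableEq

instance instFintypeDoorLoc : Fintype DoorLoc :=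
  ⟨[DoorLoc.O0, DoorLoc.O1, DoorLoc.T0, DoorLoc.T1, DoorLoc.C0, DoorLoc.C1].toFinset, by intro x; cases x <;> decide⟩

/-- Traversals of a door with an opening tunnel; `dO`, `dT`, `dC` record whether the
opening, traverse, closing tunnels are directed. -/
def doorTrav (dO dT dC : Bool) : (Bool × DoorLoc) → (Bool × DoorLoc) → Prop := fun x y =>
  (x.2 = DoorLoc.O0 ∧ y = (true, DoorLoc.O1)) ∨
  (dO = false ∧ x.2 = DoorLoc.O1 ∧ y = (true, DoorLoc.O0)) ∨
  (x.1 = true ∧ x.2 = DoorLoc.T0 ∧ y = (true, DoorLoc.T1)) ∨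
  (dT = false ∧ x.1 = true ∧ x.2 = DoorLoc.T1 ∧ y = (true, DoorLoc.T0)) ∨
  (x.2 = DoorLoc.C0 ∧ y = (false, DoorLoc.C1)) ∨
  (dC = false ∧ x.2 = DoorLoc.C1 ∧ y = (false, DoorLoc.C0))

/-- Locations of an open-optional door (opening port `O`). -/
inductive ODoorLoc | O | T0 | T1 | C0 | C1
deriving DecidableEq

instance instFintypeODoorLoc : Fintype ODoorLoc :=
  ⟨[ODoorLoc.O, ODoorLoc.T0, ODoorLoc.T1, ODoorLoc.C0, ODoorLoc.C1].toFinset, by intro x; cases x <;> decide⟩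

/-- Traversals of an open-optional door: a visit to its opening port `O` sets the state
to open. -/
def openOptDoorTrav (dT dC : Bool) : (Bool × ODoorLoc) → (Bool × ODoorLoc) → Prop := fun x y =>
  (x.2 = ODoorLoc.O ∧ y = (true, ODoorLoc.O)) ∨
  (x.1 = true ∧ x.2 = ODoorLoc.T0 ∧ y = (true, ODoorLoc.T1)) ∨
  (dT = false ∧ x.1 = true ∧ x.2 = ODoorLoc.T1 ∧ y = (true, ODoorLoc.T0)) ∨
  (x.2 = ODoorLoc.C0 ∧ y = (false, ODoorLoc.C1)) ∨
  (dC = false ∧ x.2 = ODoorLoc.C1 ∧ y = (false, ODoorLoc.C0))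

/-- A diode: a 1-state gadget with one always-traversable directed tunnel. -/
inductive DiodeLoc | inp | out
deriving DecidableEq

instance instFintypeDiodeLoc : Fintype DiodeLoc :=
  ⟨[DiodeLoc.inp, DiodeLoc.out].toFinset, by intro x; cases x <;> decide⟩

def pDiode : PlanarGadget :=
  mkPG (⟨fun x y => x.2 = DiodeLoc.inp ∧ y.2 = DiodeLoc.out,
    [DiodeLoc.inp, DiodeLoc.out], by decide, by decide⟩ : PGData Unit DiodeLoc)

/-- Locations of an open-required normal self-closing door. -/
inductive SCDLoc | O0 | O1 | T0 | T1
deriving DecidableEq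

instance instFintypeSCDLoc : Fintype SCDLoc :=
  ⟨[SCDLoc.O0, SCDLoc.O1, SCDLoc.T0, SCDLoc.T1].toFinset, by intro x; cases x <;> decide⟩

/-- Open-required normal self-closing door: opening tunnel `O` (always traversable, sets
the state open), self-closing tunnel `T` (traversable exactly when open, sets closed). -/
def nSCDTrav (dO dT : Bool) : (Bool × SCDLoc) → (Bool × SCDLoc) → Prop := fun x y =>
  (x.2 = SCDLoc.O0 ∧ y = (true, SCDLoc.O1)) ∨
  (dO = false ∧ x.2 = SCDLoc.O1 ∧ y = (true, SCDLoc.O0)) ∨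
  (x.1 = true ∧ x.2 = SCDLoc.T0 ∧ y = (false, SCDLoc.T1)) ∨
  (dT = false ∧ x.1 = true ∧ x.2 = SCDLoc.T1 ∧ y = (false, SCDLoc.T0))

/-- Locations of an open-optional normal self-closing door. -/
inductive OOSCDLoc | O | T0 | T1
deriving DecidableEq

instance instFintypeOOSCDLoc : Fintype OOSCDLoc :=
  ⟨[OOSCDLoc.O, OOSCDLoc.T0, OOSCDLoc.T1].toFinset, by intro x; cases x <;> decide⟩

/-- Open-optional normal self-closing door: opening port `O` (visit sets the state open),
self-closing tunnel `T` (traversable exactly when open, sets the state closed). -/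
def ooSCDTrav (dT : Bool) : (Bool × OOSCDLoc) → (Bool × OOSCDLoc) → Prop := fun x y =>
  (x.2 = OOSCDLoc.O ∧ y = (true, OOSCDLoc.O)) ∨
  (x.1 = true ∧ x.2 = OOSCDLoc.T0 ∧ y = (false, OOSCDLoc.T1)) ∨
  (dT = false ∧ x.1 = true ∧ x.2 = OOSCDLoc.T1 ∧ y = (false, OOSCDLoc.T0))

/-- The planar directed open-optional normal self-closing door (a 3-location gadget,
whose cyclic order is unique up to rotation and reflection). -/
def pSCD : PlanarGadget :=
  mkPG (⟨ooSCDTrav true, [OOSCDLoc.O, OOSCDLoc.T0, OOSCDLoc.T1],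
    by decide, by decide⟩ : PGData Bool OOSCDLoc)

/-- Locations of a symmetric self-closing door. -/
inductive SymSCDLoc | A0 | A1 | B0 | B1
deriving DecidableEq

instance instFintypeSymSCDLoc : Fintype SymSCDLoc :=
  ⟨[SymSCDLoc.A0, SymSCDLoc.A1, SymSCDLoc.B0, SymSCDLoc.B1].toFinset, by intro x; cases x <;> decide⟩

/-- Symmetric self-closing door: self-opening tunnel `A` (traversable exactly when
closed, sets open), self-closing tunnel `B` (traversable exactly when open, sets closed). -/
def symSCDTrav (dA dB : Bool) : (Bool × SymSCDLoc) → (Bool × SymSCDLoc) → Prop := fun x y =>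
  (x.1 = false ∧ x.2 = SymSCDLoc.A0 ∧ y = (true, SymSCDLoc.A1)) ∨
  (dA = false ∧ x.1 = false ∧ x.2 = SymSCDLoc.A1 ∧ y = (true, SymSCDLoc.A0)) ∨
  (x.1 = true ∧ x.2 = SymSCDLoc.B0 ∧ y = (false, SymSCDLoc.B1)) ∨
  (dB = false ∧ x.1 = true ∧ x.2 = SymSCDLoc.B1 ∧ y = (false, SymSCDLoc.B0))

/-- Locations of a crossover: tunnels `X0–X1` and `Y0–Y1`. -/
inductive XLoc | X0 | Y0 | X1 | Y1
deriving DecidableEq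

instance instFintypeXLoc : Fintype XLoc :=
  ⟨[XLoc.X0, XLoc.Y0, XLoc.X1, XLoc.Y1].toFinset, by intro x; cases x <;> decide⟩

/-- The cyclic order of a crossover: the locations of its two tunnels alternate. -/
def crossCyc : List XLoc := [XLoc.X0, XLoc.Y0, XLoc.X1, XLoc.Y1]

/-- The directed crossover. -/
def pDirCrossover : PlanarGadget :=
  mkPG (⟨fun x y => (x.2 = XLoc.X0 ∧ y.2 = XLoc.X1) ∨ (x.2 = XLoc.Y0 ∧ y.2 = XLoc.Y1),
    crossCyc, by decide, by decide⟩ : PGData Unit XLoc)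

/-- The undirected crossover. -/
def pUndirCrossover : PlanarGadget :=
  mkPG (⟨fun x y =>
      (x.2 = XLoc.X0 ∧ y.2 = XLoc.X1) ∨ (x.2 = XLoc.X1 ∧ y.2 = XLoc.X0) ∨
      (x.2 = XLoc.Y0 ∧ y.2 = XLoc.Y1) ∨ (x.2 = XLoc.Y1 ∧ y.2 = XLoc.Y0),
    crossCyc, by decide, by decide⟩ : PGData Unit XLoc)

/-- Locations of a tripwire lock: lock tunnel `L0→L1`, tripwire tunnel `W0→W1`. -/
inductive TWLoc | L0 | L1 | W0 | W1
deriving DecidableEq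

instance instFintypeTWLoc : Fintype TWLoc :=
  ⟨[TWLoc.L0, TWLoc.L1, TWLoc.W0, TWLoc.W1].toFinset, by intro x; cases x <;> decide⟩

/-- Traversals of the directed tripwire lock: the lock tunnel is traversable in exactly
one state (`true`) and does not change the state; the tripwire tunnel is always
traversable and toggles the state. -/
def twlTrav : (Bool × TWLoc) → (Bool × TWLoc) → Prop := fun x y =>
  (x.1 = true ∧ x.2 = TWLoc.L0 ∧ y = (true, TWLoc.L1)) ∨
  (x.2 = TWLoc.W0 ∧ y = (!x.1, TWLoc.W1))

/-- The parallel directed tripwire lock: two non-crossing tunnels oriented the same way. -/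
def parTWLData : PGData Bool TWLoc :=
  ⟨twlTrav, [TWLoc.L0, TWLoc.L1, TWLoc.W1, TWLoc.W0], by decide, by decide⟩

/-- The antiparallel directed tripwire lock: two non-crossing tunnels oriented oppositely. -/
def apTWLData : PGData Bool TWLoc :=
  ⟨twlTrav, [TWLoc.L0, TWLoc.L1, TWLoc.W0, TWLoc.W1], by decide, by decide⟩

def parTWL : PlanarGadget := mkPG parTWLData
def apTWL : PlanarGadget := mkPG apTWLData

/-- Locations of a tripwire-lock-tripwire: tripwires `Wa0→Wa1` and `Wb0→Wb1` on the
outside and lock `L0→L1` between them. -/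
inductive TLTLoc | Wa0 | Wa1 | L0 | L1 | Wb0 | Wb1
deriving DecidableEq

instance instFintypeTLTLoc : Fintype TLTLoc :=
  ⟨[TLTLoc.Wa0, TLTLoc.Wa1, TLTLoc.L0, TLTLoc.L1, TLTLoc.Wb0, TLTLoc.Wb1].toFinset, by intro x; cases x <;> decide⟩

/-- Traversals of the directed tripwire-lock-tripwire: both tripwires are always
traversable and toggle the state; the lock is traversable exactly in state `true`
and does not change the state. -/
def tltTrav : (Bool × TLTLoc) → (Bool × TLTLoc) → Prop := fun x y =>
  (x.2 = TLTLoc.Wa0 ∧ y = (!x.1, TLTLoc.Wa1)) ∨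
  (x.1 = true ∧ x.2 = TLTLoc.L0 ∧ y = (true, TLTLoc.L1)) ∨
  (x.2 = TLTLoc.Wb0 ∧ y = (!x.1, TLTLoc.Wb1))

/-- The directed tripwire-lock-tripwire with antiparallel tripwires: three non-crossing
tunnels, the two tripwires on the outside oriented oppositely, the lock in the middle. -/
def pTLT : PlanarGadget :=
  mkPG (⟨tltTrav,
    [TLTLoc.Wa0, TLTLoc.Wa1, TLTLoc.L1, TLTLoc.Wb0, TLTLoc.Wb1, TLTLoc.L0],
    by decide, by decide⟩ : PGData Bool TLTLoc)

/-! ### The twelve planar fully directed doors without internal crossings,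
named by the clockwise cyclic order of their locations, entrances uppercase and exits
lowercase (`O`/`o` opening, `T`/`t` traverse, `C`/`c` closing); opening tunnels with
adjacent endpoints are merged into a single opening port `O`. -/

/-- A fully directed door with an opening port, in a given planar embedding. -/
def portCaseDoor (c : List ODoorLoc) (h1 : c.Nodup) (h2 : ∀ l, l ∈ c) : PlanarGadget :=
  mkPG (⟨openOptDoorTrav true true, c, h1, h2⟩ : PGData Bool ODoorLoc)

/-- A fully directed door with an opening tunnel, in a given planar embedding. -/
def tunnelCaseDoor (c : List DoorLoc) (h1 : c.Nodup) (h2 : ∀ l, l ∈ c) : PlanarGadget :=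
  mkPG (⟨doorTrav true true true, c, h1, h2⟩ : PGData Bool DoorLoc)

/-- Case 1: the OcCTt door. -/
def case1Door : PlanarGadget :=
  portCaseDoor [ODoorLoc.O, ODoorLoc.C1, ODoorLoc.C0, ODoorLoc.T0, ODoorLoc.T1]
    (by decide) (by decide)

/-- Case 2: the OTtCc door. -/
def case2Door : PlanarGadget :=
  portCaseDoor [ODoorLoc.O, ODoorLoc.T0, ODoorLoc.T1, ODoorLoc.C0, ODoorLoc.C1]
    (by decide) (by decide)

/-- Case 3: the OCcTt door. -/
def case3Door : PlanarGadget :=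
  portCaseDoor [ODoorLoc.O, ODoorLoc.C0, ODoorLoc.C1, ODoorLoc.T0, ODoorLoc.T1]
    (by decide) (by decide)

/-- Case 4: the OTtcC door. -/
def case4Door : PlanarGadget :=
  portCaseDoor [ODoorLoc.O, ODoorLoc.T0, ODoorLoc.T1, ODoorLoc.C1, ODoorLoc.C0]
    (by decide) (by decide)

/-- Case 5: the OtToCc door. -/
def case5Door : PlanarGadget :=
  tunnelCaseDoor [DoorLoc.O0, DoorLoc.T1, DoorLoc.T0, DoorLoc.O1, DoorLoc.C0, DoorLoc.C1]
    (by decide) (by decide)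

/-- Case 6: the OTtoCc door. -/
def case6Door : PlanarGadget :=
  tunnelCaseDoor [DoorLoc.O0, DoorLoc.T0, DoorLoc.T1, DoorLoc.O1, DoorLoc.C0, DoorLoc.C1]
    (by decide) (by decide)

/-- Case 7: the OtTocC door. -/
def case7Door : PlanarGadget :=
  tunnelCaseDoor [DoorLoc.O0, DoorLoc.T1, DoorLoc.T0, DoorLoc.O1, DoorLoc.C1, DoorLoc.C0]
    (by decide) (by decide)

/-- The cyclic order of the Case-8 OTtocC door. -/
def case8Cyc : List DoorLoc :=
  [DoorLoc.O0, DoorLoc.T0, DoorLoc.T1, DoorLoc.O1, DoorLoc.C1, DoorLoc.C0]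

/-- Case 8: the OTtocC door. -/
def case8Door : PlanarGadget := tunnelCaseDoor case8Cyc (by decide) (by decide)

/-- Case 9: the OtcCT door. -/
def case9Door : PlanarGadget :=
  portCaseDoor [ODoorLoc.O, ODoorLoc.T1, ODoorLoc.C1, ODoorLoc.C0, ODoorLoc.T0]
    (by decide) (by decide)

/-- Case 10: the OTcCt door. -/
def case10Door : PlanarGadget :=
  portCaseDoor [ODoorLoc.O, ODoorLoc.T0, ODoorLoc.C1, ODoorLoc.C0, ODoorLoc.T1]
    (by decide) (by decide)

/-- Case 11: the OCTtc door. -/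
def case11Door : PlanarGadget :=
  portCaseDoor [ODoorLoc.O, ODoorLoc.C0, ODoorLoc.T0, ODoorLoc.T1, ODoorLoc.C1]
    (by decide) (by decide)

/-- Case 12: the OcTtC door. -/
def case12Door : PlanarGadget :=
  portCaseDoor [ODoorLoc.O, ODoorLoc.C1, ODoorLoc.T0, ODoorLoc.T1, ODoorLoc.C0]
    (by decide) (by decide)

/-- Two lists are equal as cyclic orders (up to rotation and reflection). -/
def CycEquiv {α : Type} (L M : List α) : Prop :=
  ∃ n : ℕ, M = L.rotate n ∨ M = L.reverse.rotate n

/-- In the cyclic order `c`, the pair `{a, a'}` interleaves with the pair `{b, b'}`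
(i.e. the tunnel `a–a'` crosses the tunnel `b–b'` in any planar drawing). -/
def Interleaved {α : Type} (c : List α) (a a' b b' : α) : Prop :=
  letI := Classical.decEq α
  ∃ n : ℕ,
    (c.rotate n).idxOf a = 0 ∧
    (((c.rotate n).idxOf b < (c.rotate n).idxOf a' ∧
      (c.rotate n).idxOf a' < (c.rotate n).idxOf b') ∨
     ((c.rotate n).idxOf b' < (c.rotate n).idxOf a' ∧
      (c.rotate n).idxOf a' < (c.rotate n).idxOf b))

/-! ### Auxiliary constructions for Statement 12 -/

section Aux12

open Relation

/-- Cyclic successor of a crossover port. -/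
def nextX : XLoc → XLoc
  | XLoc.X0 => XLoc.Y0
  | XLoc.Y0 => XLoc.X1
  | XLoc.X1 => XLoc.Y1
  | XLoc.Y1 => XLoc.X0

/-- Cyclic predecessor of a crossover port. -/
def prevX : XLoc → XLoc
  | XLoc.Y0 => XLoc.X0
  | XLoc.X1 => XLoc.Y0
  | XLoc.Y1 => XLoc.X1
  | XLoc.X0 => XLoc.Y1

lemma cycNext_crossCyc (l : XLoc) : cycNext crossCyc l = nextX l := by
  unfold cycNext
  rw [Subsingleton.elim (Classical.decEq XLoc) instDecidableEqXLoc]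
  cases l <;> rfl

/-- Darts of the 4-crossover system. -/
abbrev Dt12 : Type := Fin 4 × XLoc

/-- Rotation permutation. -/
def sig12 : Equiv.Perm Dt12 :=
  ⟨fun d => (d.1, nextX d.2), fun d => (d.1, prevX d.2), by decide, by decide⟩

/-- The wiring of the four directed crossovers. -/
def tauFun12 : Dt12 → Dt12 := fun d =>
  match d.1.val, d.2 with
  | 0, XLoc.X0 => (2, XLoc.Y1)
  | 0, XLoc.Y0 => (1, XLoc.X1)
  | 0, XLoc.X1 => (1, XLoc.Y0)
  | 0, XLoc.Y1 => (2, XLoc.X0)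
  | 1, XLoc.X0 => (3, XLoc.Y1)
  | 1, XLoc.Y0 => (0, XLoc.X1)
  | 1, XLoc.X1 => (0, XLoc.Y0)
  | 1, XLoc.Y1 => (3, XLoc.X0)
  | 2, XLoc.X0 => (0, XLoc.Y1)
  | 2, XLoc.Y0 => (3, XLoc.X1)
  | 2, XLoc.X1 => (3, XLoc.Y0)
  | 2, XLoc.Y1 => (0, XLoc.X0)
  | 3, XLoc.X0 => (1, XLoc.Y1)
  | 3, XLoc.Y0 => (2, XLoc.X1)
  | 3, XLoc.X1 => (2, XLoc.Y0)
  | 3, XLoc.Y1 => (1, XLoc.X0)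
  | _, _ => d

/-- Wiring as a permutation (it is an involution). -/
def tau12 : Equiv.Perm Dt12 := ⟨tauFun12, tauFun12, by decide, by decide⟩

/-- Four directed crossovers wired to behave as an undirected crossover. -/
def sys12 : MSystem (fun _ : Unit => pDirCrossover.data) where
  ι := Fin 4
  instFin := inferInstance
  kind := fun _ => ()
  J := Empty
  juncFin := inferInstance
  D := Dt12
  dartFin := inferInstance
  σ := sig12
  τ := tau12
  τ_invol := by decide
  τ_nofix := by decide
  vert := fun d => Sum.inl d.1
  port := fun d => d.2
  port_unique := by
    intro i l
    refine ⟨(i, l), ⟨rfl, rfl⟩, ?_⟩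
    rintro ⟨i', l'⟩ ⟨h1, h2⟩
    cases Sum.inl.inj h1
    cases h2
    rfl
  σ_vert := fun _ => rfl
  σ_port := by
    intro d i _
    exact (cycNext_crossCyc d.2).symm
  σ_junc := by intro _ _ j; exact j.elim

instance : Fintype sys12.D := inferInstanceAs (Fintype Dt12)
instance : DecidableEq sys12.D := inferInstanceAs (DecidableEq Dt12)
instance : Fintype sys12.ι := inferInstanceAs (Fintype (Fin 4))
instance : DecidableEq sys12.ι := inferInstanceAs (DecidableEq (Fin 4))

/-- External locations of the simulation. -/
def ext12 : XLoc → Dt12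
  | XLoc.X0 => (1, XLoc.Y1)
  | XLoc.Y0 => (3, XLoc.Y0)
  | XLoc.X1 => (2, XLoc.Y1)
  | XLoc.Y1 => (0, XLoc.Y0)

lemma eqvGen_iterate {D : Type} (f : D → D) (x : D) :
    ∀ m, Relation.EqvGen (fun a b => f a = b) x (f^[m] x)
  | 0 => Relation.EqvGen.refl x
  | m + 1 => by
    refine Relation.EqvGen.trans _ _ _ (eqvGen_iterate f x m) ?_
    rw [Function.iterate_succ_apply']
    exact Relation.EqvGen.rel _ _ rfl

lemma orbCount_eq {D : Type} (f : D → D) {n : ℕ} (N : ℕ) (g : D → Fin n) (s : Fin n → D)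
    (hgs : ∀ k, g (s k) = k) (hgf : ∀ d, g (f d) = g d)
    (hreach : ∀ d, ∃ m ∈ Finset.range N, f^[m] (s (g d)) = d) :
    orbCount f = n := by
  have hge : ∀ x y, Relation.EqvGen (fun a b => f a = b) x y → g x = g y := by
    intro x y h
    induction h with
    | rel a b hab => rw [← hab, hgf]
    | refl => rfl
    | symm a b _ ih => exact ih.symm
    | trans a b c _ _ ih1 ih2 => exact ih1.trans ih2
  have e : Quotient (⟨Relation.EqvGen fun x y => f x = y,
      Relation.EqvGen.is_equivalence _⟩ : Setoid D) ≃ Fin n :=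
    { toFun := Quotient.lift g hge
      invFun := fun k => ⟦s k⟧
      left_inv := by
        refine Quotient.ind ?_
        intro d
        obtain ⟨m, _, hm⟩ := hreach d
        refine Quotient.sound ?_
        have hiter := eqvGen_iterate f (s (g d)) m
        rw [hm] at hiter
        exact hiter
      right_inv := fun k => hgs k }
  rw [orbCount, Nat.card_congr e, Nat.card_eq_fintype_card, Fintype.card_fin]

lemma orbCount2_eq_one {D : Type} (f g : D → D) (d0 : D)
    (h : ∀ d, Relation.EqvGen (fun x y => f x = y ∨ g x = y) d0 d) :
    orbCount2 f g = 1 := by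
  rw [orbCount2, Nat.card_eq_one_iff_unique]
  constructor
  · constructor
    refine Quotient.ind fun a => Quotient.ind fun b => ?_
    exact Quotient.sound (Relation.EqvGen.trans _ _ _
      (Relation.EqvGen.symm _ _ (h a)) (h b))
  · exact ⟨⟦d0⟧⟩

/-- Face-index function for the combinatorial map of `sys12`. -/
def gf12 : Dt12 → Fin 6 := fun d =>
  match d.1.val, d.2 with
  | 0, XLoc.X0 => 0
  | 0, XLoc.Y0 => 1
  | 0, XLoc.X1 => 2
  | 0, XLoc.Y1 => 3
  | 1, XLoc.X0 => 4
  | 1, XLoc.Y0 => 3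
  | 1, XLoc.X1 => 2
  | 1, XLoc.Y1 => 1
  | 2, XLoc.X0 => 0
  | 2, XLoc.Y0 => 3
  | 2, XLoc.X1 => 5
  | 2, XLoc.Y1 => 1
  | 3, XLoc.X0 => 4
  | 3, XLoc.Y0 => 1
  | 3, XLoc.X1 => 5
  | 3, XLoc.Y1 => 3
  | _, _ => 0

/-- Edge-index function for the combinatorial map of `sys12`. -/
def gt12 : Dt12 → Fin 8 := fun d =>
  match d.1.val, d.2 with
  | 0, XLoc.X0 => 0
  | 0, XLoc.Y0 => 1
  | 0, XLoc.X1 => 2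
  | 0, XLoc.Y1 => 3
  | 1, XLoc.X0 => 4
  | 1, XLoc.Y0 => 2
  | 1, XLoc.X1 => 1
  | 1, XLoc.Y1 => 5
  | 2, XLoc.X0 => 3
  | 2, XLoc.Y0 => 6
  | 2, XLoc.X1 => 7
  | 2, XLoc.Y1 => 0
  | 3, XLoc.X0 => 5
  | 3, XLoc.Y0 => 7
  | 3, XLoc.X1 => 6
  | 3, XLoc.Y1 => 4
  | _, _ => 0

/-- Class of a dart/port: `true` on the X-loop, `false` on the Y-loop. -/
def cls12 : Dt12 → Bool := fun d =>
  (decide (d.1 = 0 ∨ d.1 = 3)) == (decide (d.2 = XLoc.X0 ∨ d.2 = XLoc.X1))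

/-- Class of a position. -/
def clsP12 : (Dt12 ⊕ Empty) → Bool := Sum.elim cls12 (fun e => e.elim)

lemma mstep_cls {u v : ((sys12.ι → Unit) × ((sys12.ι × XLoc) ⊕ sys12.J))}
    (h : MStep (fun _ : Unit => pDirCrossover.data) sys12 u v) :
    clsP12 u.2 = clsP12 v.2 := by
  cases h with
  | @trav σg i a b s' ht =>
    have ht' : (a = XLoc.X0 ∧ b = XLoc.X1) ∨ (a = XLoc.Y0 ∧ b = XLoc.Y1) := ht
    rcases ht' with ⟨ha, hb⟩ | ⟨ha, hb⟩ <;> subst ha <;> subst hb <;> rfl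
  | wire d =>
    show clsP12 (sys12.endpt d) = clsP12 (sys12.endpt (sys12.τ d))
    revert d; decide

lemma rtg_cls {u v : ((sys12.ι → Unit) × ((sys12.ι × XLoc) ⊕ sys12.J))}
    (h : Relation.ReflTransGen (MStep (fun _ : Unit => pDirCrossover.data) sys12) u v) :
    clsP12 u.2 = clsP12 v.2 := by
  induction h with
  | refl => rfl
  | tail _ hstep ih => exact ih.trans (mstep_cls hstep)

lemma gad_cls {x y : Unit × XLoc}
    (h : Relation.ReflTransGen pUndirCrossover.data.trav x y) :
    (decide (x.2 = XLoc.X0 ∨ x.2 = XLoc.X1)) = (decide (y.2 = XLoc.X0 ∨ y.2 = XLoc.X1)) := by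
  induction h with
  | refl => rfl
  | tail _ hstep ih =>
    refine ih.trans ?_
    obtain ⟨h1, h2⟩ | ⟨h1, h2⟩ | ⟨h1, h2⟩ | ⟨h1, h2⟩ := hstep <;> rw [h1, h2] <;> rfl

/-- The edge relation generated by rotation and wiring. -/
def R12 : Dt12 → Dt12 → Prop :=
  fun x y => (fun d => sys12.σ d) x = y ∨ (fun d => sys12.τ d) x = y

lemma r12_all : ∀ d : Dt12, Relation.EqvGen R12 ((0 : Fin 4), XLoc.X0) d := by
  have es : ∀ x : Dt12, Relation.EqvGen R12 x (sig12 x) :=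
    fun x => Relation.EqvGen.rel _ _ (Or.inl rfl)
  have et : ∀ x : Dt12, Relation.EqvGen R12 x (tauFun12 x) :=
    fun x => Relation.EqvGen.rel _ _ (Or.inr rfl)
  have a00 : Relation.EqvGen R12 ((0 : Fin 4), XLoc.X0) ((0 : Fin 4), XLoc.X0) :=
    Relation.EqvGen.refl _
  have a01 : Relation.EqvGen R12 ((0 : Fin 4), XLoc.X0) ((0 : Fin 4), XLoc.Y0) :=
    es ((0 : Fin 4), XLoc.X0)
  have a02 : Relation.EqvGen R12 ((0 : Fin 4), XLoc.X0) ((0 : Fin 4), XLoc.X1) :=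
    Relation.EqvGen.trans _ _ _ a01 (es _)
  have a03 : Relation.EqvGen R12 ((0 : Fin 4), XLoc.X0) ((0 : Fin 4), XLoc.Y1) :=
    Relation.EqvGen.trans _ _ _ a02 (es _)
  have a23 : Relation.EqvGen R12 ((0 : Fin 4), XLoc.X0) ((2 : Fin 4), XLoc.Y1) :=
    et ((0 : Fin 4), XLoc.X0)
  have a11 : Relation.EqvGen R12 ((0 : Fin 4), XLoc.X0) ((1 : Fin 4), XLoc.Y0) :=
    Relation.EqvGen.trans _ _ _ a02 (et _)
  have a12 : Relation.EqvGen R12 ((0 : Fin 4), XLoc.X0) ((1 : Fin 4), XLoc.X1) :=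
    Relation.EqvGen.trans _ _ _ a11 (es _)
  have a13 : Relation.EqvGen R12 ((0 : Fin 4), XLoc.X0) ((1 : Fin 4), XLoc.Y1) :=
    Relation.EqvGen.trans _ _ _ a12 (es _)
  have a10 : Relation.EqvGen R12 ((0 : Fin 4), XLoc.X0) ((1 : Fin 4), XLoc.X0) :=
    Relation.EqvGen.trans _ _ _ a13 (es _)
  have a20 : Relation.EqvGen R12 ((0 : Fin 4), XLoc.X0) ((2 : Fin 4), XLoc.X0) :=
    Relation.EqvGen.trans _ _ _ a03 (et _)
  have a21 : Relation.EqvGen R12 ((0 : Fin 4), XLoc.X0) ((2 : Fin 4), XLoc.Y0) :=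
    Relation.EqvGen.trans _ _ _ a20 (es _)
  have a22 : Relation.EqvGen R12 ((0 : Fin 4), XLoc.X0) ((2 : Fin 4), XLoc.X1) :=
    Relation.EqvGen.trans _ _ _ a21 (es _)
  have a30 : Relation.EqvGen R12 ((0 : Fin 4), XLoc.X0) ((3 : Fin 4), XLoc.X0) :=
    Relation.EqvGen.trans _ _ _ a13 (et _)
  have a31 : Relation.EqvGen R12 ((0 : Fin 4), XLoc.X0) ((3 : Fin 4), XLoc.Y0) :=
    Relation.EqvGen.trans _ _ _ a30 (es _)
  have a32 : Relation.EqvGen R12 ((0 : Fin 4), XLoc.X0) ((3 : Fin 4), XLoc.X1) :=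
    Relation.EqvGen.trans _ _ _ a31 (es _)
  have a33 : Relation.EqvGen R12 ((0 : Fin 4), XLoc.X0) ((3 : Fin 4), XLoc.Y1) :=
    Relation.EqvGen.trans _ _ _ a32 (es _)
  rintro ⟨i, p⟩
  fin_cases i <;> cases p <;> assumption

lemma updState_unit (σg : sys12.ι → Unit) (i : sys12.ι) :
    updState σg i () = σg := by
  funext j
  rfl

lemma path_X0_X1 (σg : sys12.ι → Unit) :
    Relation.ReflTransGen (MStep (fun _ : Unit => pDirCrossover.data) sys12)
      (σg, Sum.inl ((1 : Fin 4), XLoc.Y1)) (σg, Sum.inl ((2 : Fin 4), XLoc.Y1)) := by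
  have t1 : MStep (fun _ : Unit => pDirCrossover.data) sys12
      (σg, Sum.inl ((1 : Fin 4), XLoc.Y1)) (σg, Sum.inl ((3 : Fin 4), XLoc.X0)) :=
    MStep.wire (S := sys12) ((1 : Fin 4), XLoc.Y1)
  have t2 : MStep (fun _ : Unit => pDirCrossover.data) sys12
      (σg, Sum.inl ((3 : Fin 4), XLoc.X0)) (updState σg ((3 : Fin 4) : sys12.ι) (), Sum.inl ((3 : Fin 4), XLoc.X1)) :=
    MStep.trav (Or.inl ⟨rfl, rfl⟩)
  have t3 : MStep (fun _ : Unit => pDirCrossover.data) sys12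
      (updState σg ((3 : Fin 4) : sys12.ι) (), Sum.inl ((3 : Fin 4), XLoc.X1))
      (updState σg ((3 : Fin 4) : sys12.ι) (), Sum.inl ((2 : Fin 4), XLoc.Y0)) :=
    MStep.wire (S := sys12) ((3 : Fin 4), XLoc.X1)
  have t4 : MStep (fun _ : Unit => pDirCrossover.data) sys12
      (updState σg ((3 : Fin 4) : sys12.ι) (), Sum.inl ((2 : Fin 4), XLoc.Y0))
      (updState (updState σg ((3 : Fin 4) : sys12.ι) ()) ((2 : Fin 4) : sys12.ι) (), Sum.inl ((2 : Fin 4), XLoc.Y1)) :=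
    MStep.trav (Or.inr ⟨rfl, rfl⟩)
  erw [updState_unit] at t4
  erw [updState_unit] at t2 t3
  exact (Relation.ReflTransGen.single t1).tail t2 |>.tail t3 |>.tail t4

lemma path_X1_X0 (σg : sys12.ι → Unit) :
    Relation.ReflTransGen (MStep (fun _ : Unit => pDirCrossover.data) sys12)
      (σg, Sum.inl ((2 : Fin 4), XLoc.Y1)) (σg, Sum.inl ((1 : Fin 4), XLoc.Y1)) := by
  have t1 : MStep (fun _ : Unit => pDirCrossover.data) sys12
      (σg, Sum.inl ((2 : Fin 4), XLoc.Y1)) (σg, Sum.inl ((0 : Fin 4), XLoc.X0)) :=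
    MStep.wire (S := sys12) ((2 : Fin 4), XLoc.Y1)
  have t2 : MStep (fun _ : Unit => pDirCrossover.data) sys12
      (σg, Sum.inl ((0 : Fin 4), XLoc.X0)) (updState σg ((0 : Fin 4) : sys12.ι) (), Sum.inl ((0 : Fin 4), XLoc.X1)) :=
    MStep.trav (Or.inl ⟨rfl, rfl⟩)
  have t3 : MStep (fun _ : Unit => pDirCrossover.data) sys12
      (updState σg ((0 : Fin 4) : sys12.ι) (), Sum.inl ((0 : Fin 4), XLoc.X1))
      (updState σg ((0 : Fin 4) : sys12.ι) (), Sum.inl ((1 : Fin 4), XLoc.Y0)) :=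
    MStep.wire (S := sys12) ((0 : Fin 4), XLoc.X1)
  have t4 : MStep (fun _ : Unit => pDirCrossover.data) sys12
      (updState σg ((0 : Fin 4) : sys12.ι) (), Sum.inl ((1 : Fin 4), XLoc.Y0))
      (updState (updState σg ((0 : Fin 4) : sys12.ι) ()) ((1 : Fin 4) : sys12.ι) (), Sum.inl ((1 : Fin 4), XLoc.Y1)) :=
    MStep.trav (Or.inr ⟨rfl, rfl⟩)
  erw [updState_unit] at t4
  erw [updState_unit] at t2 t3
  exact (Relation.ReflTransGen.single t1).tail t2 |>.tail t3 |>.tail t4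

lemma path_Y0_Y1 (σg : sys12.ι → Unit) :
    Relation.ReflTransGen (MStep (fun _ : Unit => pDirCrossover.data) sys12)
      (σg, Sum.inl ((3 : Fin 4), XLoc.Y0)) (σg, Sum.inl ((0 : Fin 4), XLoc.Y0)) := by
  have t1 : MStep (fun _ : Unit => pDirCrossover.data) sys12
      (σg, Sum.inl ((3 : Fin 4), XLoc.Y0)) (updState σg ((3 : Fin 4) : sys12.ι) (), Sum.inl ((3 : Fin 4), XLoc.Y1)) :=
    MStep.trav (Or.inr ⟨rfl, rfl⟩)
  have t2 : MStep (fun _ : Unit => pDirCrossover.data) sys12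
      (updState σg ((3 : Fin 4) : sys12.ι) (), Sum.inl ((3 : Fin 4), XLoc.Y1))
      (updState σg ((3 : Fin 4) : sys12.ι) (), Sum.inl ((1 : Fin 4), XLoc.X0)) :=
    MStep.wire (S := sys12) ((3 : Fin 4), XLoc.Y1)
  have t3 : MStep (fun _ : Unit => pDirCrossover.data) sys12
      (updState σg ((3 : Fin 4) : sys12.ι) (), Sum.inl ((1 : Fin 4), XLoc.X0))
      (updState (updState σg ((3 : Fin 4) : sys12.ι) ()) ((1 : Fin 4) : sys12.ι) (), Sum.inl ((1 : Fin 4), XLoc.X1)) :=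
    MStep.trav (Or.inl ⟨rfl, rfl⟩)
  have t4 : MStep (fun _ : Unit => pDirCrossover.data) sys12
      (updState (updState σg ((3 : Fin 4) : sys12.ι) ()) ((1 : Fin 4) : sys12.ι) (), Sum.inl ((1 : Fin 4), XLoc.X1))
      (updState (updState σg ((3 : Fin 4) : sys12.ι) ()) ((1 : Fin 4) : sys12.ι) (), Sum.inl ((0 : Fin 4), XLoc.Y0)) :=
    MStep.wire (S := sys12) ((1 : Fin 4), XLoc.X1)
  erw [updState_unit] at t3 t4
  erw [updState_unit] at t1 t2
  exact (Relation.ReflTransGen.single t1).tail t2 |>.tail t3 |>.tail t4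

lemma path_Y1_Y0 (σg : sys12.ι → Unit) :
    Relation.ReflTransGen (MStep (fun _ : Unit => pDirCrossover.data) sys12)
      (σg, Sum.inl ((0 : Fin 4), XLoc.Y0)) (σg, Sum.inl ((3 : Fin 4), XLoc.Y0)) := by
  have t1 : MStep (fun _ : Unit => pDirCrossover.data) sys12
      (σg, Sum.inl ((0 : Fin 4), XLoc.Y0)) (updState σg ((0 : Fin 4) : sys12.ι) (), Sum.inl ((0 : Fin 4), XLoc.Y1)) :=
    MStep.trav (Or.inr ⟨rfl, rfl⟩)
  have t2 : MStep (fun _ : Unit => pDirCrossover.data) sys12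
      (updState σg ((0 : Fin 4) : sys12.ι) (), Sum.inl ((0 : Fin 4), XLoc.Y1))
      (updState σg ((0 : Fin 4) : sys12.ι) (), Sum.inl ((2 : Fin 4), XLoc.X0)) :=
    MStep.wire (S := sys12) ((0 : Fin 4), XLoc.Y1)
  have t3 : MStep (fun _ : Unit => pDirCrossover.data) sys12
      (updState σg ((0 : Fin 4) : sys12.ι) (), Sum.inl ((2 : Fin 4), XLoc.X0))
      (updState (updState σg ((0 : Fin 4) : sys12.ι) ()) ((2 : Fin 4) : sys12.ι) (), Sum.inl ((2 : Fin 4), XLoc.X1)) :=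
    MStep.trav (Or.inl ⟨rfl, rfl⟩)
  have t4 : MStep (fun _ : Unit => pDirCrossover.data) sys12
      (updState (updState σg ((0 : Fin 4) : sys12.ι) ()) ((2 : Fin 4) : sys12.ι) (), Sum.inl ((2 : Fin 4), XLoc.X1))
      (updState (updState σg ((0 : Fin 4) : sys12.ι) ()) ((2 : Fin 4) : sys12.ι) (), Sum.inl ((3 : Fin 4), XLoc.Y0)) :=
    MStep.wire (S := sys12) ((2 : Fin 4), XLoc.X1)
  erw [updState_unit] at t3 t4
  erw [updState_unit] at t1 t2
  exact (Relation.ReflTransGen.single t1).tail t2 |>.tail t3 |>.tail t4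

lemma rtg_cls' {σ1 σ2 : sys12.ι → Unit} {x y : Dt12}
    (h : Relation.ReflTransGen (MStep (fun _ : Unit => pDirCrossover.data) sys12)
      (σ1, Sum.inl x) (σ2, Sum.inl y)) :
    cls12 x = cls12 y :=
  rtg_cls h

lemma gad_cls' {s s' : Unit} {a b : XLoc}
    (h : Relation.ReflTransGen pUndirCrossover.data.trav (s, a) (s', b)) :
    (decide (a = XLoc.X0 ∨ a = XLoc.X1)) = (decide (b = XLoc.X0 ∨ b = XLoc.X1)) :=
  gad_cls h

end Aux12


/-- A directed crossover can planarly simulate an undirected crossover: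
wiring four directed crossovers as in the construction yields a planar system (with four
external locations alternating in cyclic order) whose behavior is exactly that of the
undirected crossover. -/
theorem directed_crossover_planarly_simulates_undirected_crossover :
    ∃ (S : MSystem (fun _ : Unit => pDirCrossover.data))
      (ext : pUndirCrossover.Loc → S.ι × pDirCrossover.Loc)
      (enc : pUndirCrossover.State → (S.ι → pDirCrossover.State)),
      Nat.card S.ι = 4 ∧
      IsPlanarSimulation (fun _ : Unit => pDirCrossover.data) pUndirCrossover S ext enc := by
  refine ⟨sys12, ext12, fun _ _ => (), ?_, ?_, ?_, ?_, ?_, ?_⟩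
  · show Nat.card (Fin 4) = 4
    rw [Nat.card_eq_fintype_card, Fintype.card_fin]
  · -- ext injective
    have hinj : ∀ a b : XLoc, ext12 a = ext12 b → a = b := by decide
    exact fun a b h => hinj a b h
  · -- enc injective
    intro a b _
    rfl
  · -- planarity
    have h1 : orbCount (fun d => sys12.σ d) = 4 :=
      orbCount_eq _ 4 (fun d => d.1) (fun k => (k, XLoc.X0))
        (fun _ => rfl) (fun _ => rfl) (by decide)
    have h2 : orbCount sys12.facePerm = 6 :=
      orbCount_eq _ 4 gf12
        ![((0 : Fin 4), XLoc.X0), (0, XLoc.Y0), (0, XLoc.X1), (0, XLoc.Y1),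
          (1, XLoc.X0), (2, XLoc.X1)]
        (by decide) (by rintro ⟨i, p⟩; fin_cases i <;> cases p <;> rfl) (by decide)
    have h3 : orbCount (fun d => sys12.τ d) = 8 :=
      orbCount_eq _ 2 gt12
        ![((0 : Fin 4), XLoc.X0), (0, XLoc.Y0), (0, XLoc.X1), (0, XLoc.Y1),
          (1, XLoc.X0), (1, XLoc.Y1), (2, XLoc.Y0), (2, XLoc.X1)]
        (by decide) (by rintro ⟨i, p⟩; fin_cases i <;> cases p <;> rfl) (by decide)
    have h4 : orbCount2 (fun d => sys12.σ d) (fun d => sys12.τ d) = 1 :=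
      orbCount2_eq_one _ _ ((0 : Fin 4), XLoc.X0) r12_all
    unfold MSystem.IsPlanar
    rw [h1, h2, h3, h4]
  · -- reachability behavior
    intro s s' a b
    constructor
    · intro h
      have hc := rtg_cls' h
      revert hc
      cases a <;> cases b <;> intro hc
      exacts [Relation.ReflTransGen.refl,
        absurd hc (by decide),
        Relation.ReflTransGen.single (Or.inl ⟨rfl, rfl⟩),
        absurd hc (by decide),
        absurd hc (by decide),
        Relation.ReflTransGen.refl,
        absurd hc (by decide),
        Relation.ReflTransGen.single (Or.inr (Or.inr (Or.inl ⟨rfl, rfl⟩))),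
        Relation.ReflTransGen.single (Or.inr (Or.inl ⟨rfl, rfl⟩)),
        absurd hc (by decide),
        Relation.ReflTransGen.refl,
        absurd hc (by decide),
        absurd hc (by decide),
        Relation.ReflTransGen.single (Or.inr (Or.inr (Or.inr ⟨rfl, rfl⟩))),
        absurd hc (by decide),
        Relation.ReflTransGen.refl]
    · intro h
      have hx := gad_cls' h
      revert hx
      cases a <;> cases b <;> intro hx
      exacts [Relation.ReflTransGen.refl,
        absurd hx (by decide),
        path_X0_X1 _,
        absurd hx (by decide),
        absurd hx (by decide),
        Relation.ReflTransGen.refl,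
        absurd hx (by decide),
        path_Y0_Y1 _,
        path_X1_X0 _,
        absurd hx (by decide),
        Relation.ReflTransGen.refl,
        absurd hx (by decide),
        absurd hx (by decide),
        path_Y1_Y0 _,
        absurd hx (by decide),
        Relation.ReflTransGen.refl]
  · -- face condition
    refine ⟨true, ?_⟩
    intro a da db hda hdb
    obtain ⟨h1, h2⟩ := hda
    obtain ⟨h3, h4⟩ := hdb
    have eda : da = ext12 a := Prod.ext (Sum.inl.inj h1) h2
    have edb := Prod.ext (Sum.inl.inj h3) h4
    refine ⟨1, Nat.one_pos, ?_, ?_⟩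
    · rw [eda, edb]
      show sys12.facePerm^[1] (ext12 a) = ext12 (cycNext crossCyc a)
      rw [cycNext_crossCyc a]
      cases a <;> rfl
    · intro j hj0 hj1
      exact absurd hj0 (by omega)
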